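/- (Theorem 2, asymptotic feasibility.) Under the stated setup, if there exist α* ∈ ℝⁿ and ω* ∈ ℝ^p with Z·α* = 0 and Φ(a) + ⟨ω*, Z·a⟩ ≥ Φ(α*) for all a ∈ ℝⁿ, then ω(t+1) − ω((t−d)⁺) → 0 as t → ∞, and consequently Z·α(t) → 0 as t → ∞. -/

import Mathlib

open Matrix Finset Filter

/-- The quadratic form `‖x‖²_A = xᵀ A x`. -/
noncomputable def qf {k : ℕ} (A : Matrix (Fin k) (Fin k) ℝ) (x : Fin k → ℝ) : ℝ :=
  x ⬝ᵥ (A *ᵥ x)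

section auxlemmas

variable {k : ℕ} {A : Matrix (Fin k) (Fin k) ℝ}

lemma qf_nonneg (hA : A.PosSemidef) (x : Fin k → ℝ) : 0 ≤ qf A x := by
  have h := hA.dotProduct_mulVec_nonneg x
  simpa only [star_trivial, qf] using h

lemma symm_of_posSemidef (hA : A.PosSemidef) : Aᵀ = A := by
  rw [← Matrix.conjTranspose_eq_transpose_of_trivial]; exact hA.1

lemma dot_symm (hA : Aᵀ = A) (x y : Fin k → ℝ) :
    x ⬝ᵥ (A *ᵥ y) = y ⬝ᵥ (A *ᵥ x) := by
  rw [Matrix.dotProduct_mulVec, ← Matrix.mulVec_transpose, hA, dotProduct_comm]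

lemma dot_symm2 (hA : Aᵀ = A) (x c : Fin k → ℝ) :
    x ⬝ᵥ (A *ᵥ c) = (A *ᵥ x) ⬝ᵥ c := by
  rw [Matrix.dotProduct_mulVec]
  congr 1
  conv_lhs => rw [← hA]
  rw [Matrix.vecMul_transpose]

lemma dot_ZT {l : ℕ} (Z : Matrix (Fin l) (Fin k) ℝ) (x : Fin k → ℝ) (c : Fin l → ℝ) :
    x ⬝ᵥ (Zᵀ *ᵥ c) = (Z *ᵥ x) ⬝ᵥ c := by
  rw [Matrix.dotProduct_mulVec, Matrix.vecMul_transpose]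

lemma qf_sub (hA : Aᵀ = A) (x y : Fin k → ℝ) :
    qf A (x - y) = qf A x - 2 * (x ⬝ᵥ (A *ᵥ y)) + qf A y := by
  simp only [qf, Matrix.mulVec_sub, sub_dotProduct, dotProduct_sub]
  rw [dot_symm hA y x]; ring

lemma qf_add (hA : Aᵀ = A) (x y : Fin k → ℝ) :
    qf A (x + y) = qf A x + 2 * (x ⬝ᵥ (A *ᵥ y)) + qf A y := by
  simp only [qf, Matrix.mulVec_add, add_dotProduct, dotProduct_add]
  rw [dot_symm hA y x]; ring

lemma three_point (hA : Aᵀ = A) (a b c : Fin k → ℝ) :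
    2 * ((a - b) ⬝ᵥ (A *ᵥ (c - b))) = qf A (a - b) + qf A (c - b) - qf A (a - c) := by
  have h := qf_sub hA (a - b) (c - b)
  rw [show (a - b) - (c - b) = a - c from by abel] at h
  linarith

lemma qf_smul_matrix (c : ℝ) (x : Fin k → ℝ) : qf (c • A) x = c * qf A x := by
  simp [qf, Matrix.smul_mulVec, dotProduct_smul, smul_eq_mul]

lemma qf_sub_matrix (B : Matrix (Fin k) (Fin k) ℝ) (x : Fin k → ℝ) :
    qf (A - B) x = qf A x - qf B x := by
  simp [qf, Matrix.sub_mulVec, dotProduct_sub]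

lemma qf_combo (hA : Aᵀ = A) (θ : ℝ) (x y : Fin k → ℝ) :
    qf A ((1 - θ) • x + θ • y)
      = (1 - θ) * qf A x + θ * qf A y - θ * (1 - θ) * qf A (y - x) := by
  rw [qf_sub hA y x]
  simp only [qf, Matrix.mulVec_add, Matrix.mulVec_smul, dotProduct_add,
    add_dotProduct, dotProduct_smul, smul_dotProduct, smul_eq_mul]
  rw [dot_symm hA y x]; ring

lemma sum_dot (s : Finset ℕ) (v : ℕ → Fin k → ℝ) (w : Fin k → ℝ) :
    (∑ j ∈ s, v j) ⬝ᵥ w = ∑ j ∈ s, (v j ⬝ᵥ w) := by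
  classical
  induction s using Finset.induction with
  | empty => simp
  | insert _ _ h ih => rw [Finset.sum_insert h, Finset.sum_insert h, add_dotProduct, ih]

lemma dot_sum (s : Finset ℕ) (v : ℕ → Fin k → ℝ) (w : Fin k → ℝ) :
    w ⬝ᵥ (∑ j ∈ s, v j) = ∑ j ∈ s, (w ⬝ᵥ v j) := by
  classical
  induction s using Finset.induction with
  | empty => simp
  | insert _ _ h ih => rw [Finset.sum_insert h, Finset.sum_insert h, dotProduct_add, ih]

lemma mulVec_sum' (s : Finset ℕ) (v : ℕ → Fin k → ℝ) :
    A *ᵥ (∑ j ∈ s, v j) = ∑ j ∈ s, A *ᵥ v j :=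
  map_sum (Matrix.mulVecLin A) v s

lemma qf_sum_le (hA : A.PosSemidef) (s : Finset ℕ) (v : ℕ → Fin k → ℝ) :
    qf A (∑ j ∈ s, v j) ≤ s.card * ∑ j ∈ s, qf A (v j) := by
  have hsym : Aᵀ = A := symm_of_posSemidef hA
  have hip : ∀ i j, (v i) ⬝ᵥ (A *ᵥ v j) ≤ (qf A (v i) + qf A (v j)) / 2 := by
    intro i j
    have h0 : 0 ≤ qf A (v i - v j) := qf_nonneg hA _
    rw [qf_sub hsym] at h0; linarith
  calc qf A (∑ j ∈ s, v j) = ∑ i ∈ s, ∑ j ∈ s, (v i) ⬝ᵥ (A *ᵥ v j) := by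
        rw [qf, mulVec_sum', sum_dot]
        exact Finset.sum_congr rfl fun i _ => dot_sum _ _ _
    _ ≤ ∑ i ∈ s, ∑ j ∈ s, (qf A (v i) + qf A (v j)) / 2 :=
        Finset.sum_le_sum fun i _ => Finset.sum_le_sum fun j _ => hip i j
    _ = s.card * ∑ j ∈ s, qf A (v j) := by
        simp only [Finset.sum_div, Finset.sum_add_distrib, Finset.sum_const, nsmul_eq_mul,
          ← Finset.sum_div, ← Finset.mul_sum]
        ring

lemma prox_strong (hA : A.PosDef)
    (Hr : (Fin k → ℝ) → ℝ) (hr : ConvexOn ℝ Set.univ Hr) (u x : Fin k → ℝ)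
    (hmin : ∀ v, Hr x + 1/2 * qf A (x - u) ≤ Hr v + 1/2 * qf A (v - u))
    (v : Fin k → ℝ) :
    Hr x + 1/2 * qf A (x - u) + 1/2 * qf A (v - x) ≤ Hr v + 1/2 * qf A (v - u) := by
  have hsym : Aᵀ = A := symm_of_posSemidef hA.posSemidef
  set K := qf A (v - x) with hK
  have hK0 : 0 ≤ K := by rw [hK]; exact qf_nonneg hA.posSemidef _
  have key : ∀ θ : ℝ, 0 < θ → θ ≤ 1 →
      Hr x + 1/2 * qf A (x - u) + 1/2 * (1 - θ) * K ≤ Hr v + 1/2 * qf A (v - u) := by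
    intro θ hθ0 hθ1
    have hmem : ∀ z : Fin k → ℝ, z ∈ Set.univ := fun z => Set.mem_univ z
    have hconv := hr.2 (hmem x) (hmem v) (by linarith : (0:ℝ) ≤ 1 - θ) (le_of_lt hθ0)
      (by ring)
    have hmid := hmin ((1 - θ) • x + θ • v)
    have hq : qf A ((1 - θ) • x + θ • v - u)
        = (1 - θ) * qf A (x - u) + θ * qf A (v - u) - θ * (1 - θ) * K := by
      have e : (1 - θ) • x + θ • v - u = (1 - θ) • (x - u) + θ • (v - u) := by
        module
      have e2 : v - u - (x - u) = v - x := by abel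
      rw [e, qf_combo hsym, e2]
    rw [hq] at hmid
    simp only [smul_eq_mul] at hconv
    nlinarith [hconv, hmid]
  refine le_of_forall_pos_le_add fun ε hε => ?_
  have hθ0 : 0 < min 1 (ε / (K + 1)) := lt_min one_pos (div_pos hε (by linarith))
  have h := key _ hθ0 (min_le_left _ _)
  have hbd : 1/2 * (min 1 (ε / (K + 1))) * K ≤ ε := by
    have h1 : min 1 (ε / (K + 1)) ≤ ε / (K + 1) := min_le_right _ _
    have h2 : 0 < K + 1 := by linarith
    have : min 1 (ε / (K + 1)) * K ≤ (ε / (K + 1)) * (K + 1) :=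
      mul_le_mul h1 (by linarith) hK0 (le_of_lt (div_pos hε h2))
    rw [div_mul_cancel₀] at this
    · linarith
    · exact ne_of_gt h2
  nlinarith [h, hbd]

lemma sum_shift_le (ψ : ℕ → ℝ) (hψ : ∀ t, 0 ≤ ψ t) (d N : ℕ) :
    ∑ t ∈ range N, ψ (t - d) ≤ (d + 1 : ℝ) * ψ 0 + ∑ t ∈ range N, ψ (t + 1) := by
  by_cases hN : N ≤ d + 1
  · have h1 : ∑ t ∈ range N, ψ (t - d) = N * ψ 0 := by
      rw [Finset.sum_congr rfl (fun t ht => by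
        simp only [Finset.mem_range] at ht
        rw [Nat.sub_eq_zero_of_le (by omega : t ≤ d)] :
        ∀ t ∈ range N, ψ (t - d) = ψ 0)]
      simp [Finset.sum_const]
    rw [h1]
    have h2 : (0:ℝ) ≤ ∑ t ∈ range N, ψ (t + 1) := Finset.sum_nonneg fun t _ => hψ _
    have h3 : (N:ℝ) ≤ (d+1:ℝ) := by exact_mod_cast hN
    nlinarith [hψ 0]
  · push_neg at hN
    have hdN : d + 1 ≤ N := by omega
    rw [Finset.range_eq_Ico, ← Finset.sum_Ico_consecutive _ (Nat.zero_le (d+1)) hdN]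
    have h1 : ∑ t ∈ Finset.Ico 0 (d+1), ψ (t - d) = (d+1 : ℝ) * ψ 0 := by
      rw [Finset.sum_congr rfl (fun t ht => by
        rw [Nat.sub_eq_zero_of_le (by simp at ht; omega : t ≤ d)] :
        ∀ t ∈ Finset.Ico 0 (d+1), ψ (t - d) = ψ 0)]
      simp [Finset.sum_const, Nat.card_Ico]
    rw [h1]
    have h2 : ∑ t ∈ Finset.Ico (d+1) N, ψ (t - d)
        = ∑ i ∈ Finset.Ico 0 (N - (d+1)), ψ (i + 1) := by
      rw [Finset.sum_Ico_eq_sum_range, Finset.range_eq_Ico]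
      exact Finset.sum_congr rfl fun i _ => by congr 1; omega
    rw [h2]
    have h3 : ∑ i ∈ Finset.Ico 0 (N - (d+1)), ψ (i + 1) ≤ ∑ i ∈ Finset.Ico 0 N, ψ (i + 1) :=
      Finset.sum_le_sum_of_subset_of_nonneg
        (Finset.Ico_subset_Ico le_rfl (by omega)) (fun i _ _ => hψ _)
    linarith

lemma double_sum_le (δ : ℕ → ℝ) (hδ : ∀ t, 0 ≤ δ t) (d N : ℕ) :
    ∑ t ∈ range N, ∑ j ∈ Finset.Icc (t - d) t, δ j
      ≤ (d + 1 : ℝ) * ∑ t ∈ range N, δ t := by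
  have hcomm : ∑ t ∈ range N, ∑ j ∈ Finset.Icc (t - d) t, δ j
      = ∑ j ∈ range N, ∑ t ∈ Finset.Icc j (j + d) ∩ range N, δ j := by
    refine Finset.sum_comm' fun t j => ?_
    simp only [Finset.mem_range, Finset.mem_Icc, Finset.mem_inter]
    omega
  rw [hcomm]
  have hb : ∀ j ∈ range N, ∑ t ∈ Finset.Icc j (j + d) ∩ range N, δ j ≤ (d+1 : ℝ) * δ j := by
    intro j _
    rw [Finset.sum_const, nsmul_eq_mul]
    have hcard : (Finset.Icc j (j + d) ∩ range N).card ≤ d + 1 := by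
      calc (Finset.Icc j (j + d) ∩ range N).card ≤ (Finset.Icc j (j + d)).card :=
            Finset.card_le_card (Finset.inter_subset_left)
        _ = d + 1 := by rw [Nat.card_Icc]; omega
    have : ((Finset.Icc j (j + d) ∩ range N).card : ℝ) ≤ (d+1 : ℝ) := by exact_mod_cast hcard
    exact mul_le_mul_of_nonneg_right this (hδ j)
  calc ∑ j ∈ range N, ∑ t ∈ Finset.Icc j (j + d) ∩ range N, δ j
      ≤ ∑ j ∈ range N, (d+1:ℝ) * δ j := Finset.sum_le_sum hb
    _ = (d+1:ℝ) * ∑ t ∈ range N, δ t := by rw [Finset.mul_sum]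

lemma tendsto_of_sq {c : ℕ → ℝ} (h : Tendsto (fun t => c t ^ 2) atTop (nhds 0)) :
    Tendsto c atTop (nhds 0) := by
  rw [tendsto_zero_iff_abs_tendsto_zero]
  have h2 : Tendsto (fun t => Real.sqrt (c t ^ 2)) atTop (nhds 0) := by
    have := (Real.continuous_sqrt.tendsto 0).comp h
    simpa [Function.comp_def] using this
  simpa [Real.sqrt_sq_eq_abs, Function.comp_def] using h2

lemma mulVec_tendsto_zero {l : ℕ} (A : Matrix (Fin k) (Fin l) ℝ) {f : ℕ → Fin l → ℝ}
    (hf : Tendsto f atTop (nhds 0)) :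
    Tendsto (fun t => A *ᵥ f t) atTop (nhds 0) := by
  rw [tendsto_pi_nhds] at hf ⊢
  intro i
  have hcomp : ∀ j, Tendsto (fun t => A i j * f t j) atTop (nhds 0) := by
    intro j
    have := (hf j).const_mul (A i j)
    simpa using this
  have := tendsto_finset_sum Finset.univ (fun j _ => hcomp j)
  simpa [Matrix.mulVec, dotProduct] using this

open scoped MatrixOrder in
lemma exists_sqrt_aux {l : ℕ} (S : Matrix (Fin l) (Fin l) ℝ) (hS : S.PosSemidef) :
    ∃ R : Matrix (Fin l) (Fin l) ℝ, R.PosSemidef ∧ R * R = S :=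
  ⟨CFC.sqrt S, Matrix.nonneg_iff_posSemidef.1 (CFC.sqrt_nonneg S),
    CFC.sqrt_mul_sqrt_self S (Matrix.nonneg_iff_posSemidef.2 hS)⟩

end auxlemmas

/-- Theorem 2, asymptotic feasibility: `ω(t+1) − ω((t−d)⁺) → 0`
and `Z·α(t) → 0`. -/
theorem asyn_ddpg_asymptotic_feasibility
    (n p : ℕ) (Z : Matrix (Fin p) (Fin n) ℝ)
    (C Hm : Matrix (Fin n) (Fin n) ℝ) (S : Matrix (Fin p) (Fin p) ℝ)
    (hC : C.PosDef) (hHm : Hm.PosDef) (hS : S.PosDef)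
    (d : ℕ) (hd : 1 ≤ d)
    (Hs Hr : (Fin n → ℝ) → ℝ) (gs : (Fin n → ℝ) → (Fin n → ℝ))
    (hconv_s : ∀ a b : Fin n → ℝ, Hs a + gs a ⬝ᵥ (b - a) ≤ Hs b)
    (hsmooth : ∀ a b : Fin n → ℝ, Hs b ≤ Hs a + gs a ⬝ᵥ (b - a) + 1 / 2 * qf Hm (b - a))
    (hr : ConvexOn ℝ Set.univ Hr)
    (α : ℕ → Fin n → ℝ) (ω : ℕ → Fin p → ℝ)
    (hα : ∀ t : ℕ, ∀ v : Fin n → ℝ,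
      Hr (α (t + 1)) + 1 / 2 * qf C⁻¹ (α (t + 1) -
          (α t - C *ᵥ (gs (α t) + Zᵀ *ᵥ ω (t - d) + (Zᵀ * S * Z) *ᵥ α (t - d))))
        ≤ Hr v + 1 / 2 * qf C⁻¹ (v -
          (α t - C *ᵥ (gs (α t) + Zᵀ *ᵥ ω (t - d) + (Zᵀ * S * Z) *ᵥ α (t - d)))))
    (hω : ∀ t : ℕ, ω (t + 1) = ω (t - d) + (S * Z) *ᵥ α (t + 1))
    (hstep1 : (C⁻¹ - Hm - Zᵀ * (((1 + d : ℝ)) ^ 2 • S) * Z).PosSemidef)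
    (hstep2 : (C⁻¹ - Zᵀ * S * Z).PosDef)
    (κ : ℝ) (hκ : 0 ≤ κ) (hbound : ∀ t : ℕ, qf (Zᵀ * S * Z) (α t) ≤ κ ^ 2)
    (hexists : ∃ (αs : Fin n → ℝ) (ωs : Fin p → ℝ), Z *ᵥ αs = 0 ∧
      ∀ a : Fin n → ℝ, Hs αs + Hr αs ≤ (Hs a + Hr a) + ωs ⬝ᵥ (Z *ᵥ a)) :
    Tendsto (fun t : ℕ => ω (t + 1) - ω (t - d)) atTop (nhds 0) ∧
      Tendsto (fun t : ℕ => Z *ᵥ α t) atTop (nhds 0) := by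
  obtain ⟨αs, ωs, hZαs, hsaddle⟩ := hexists
  have hCdet : IsUnit C.det := isUnit_iff_ne_zero.2 hC.det_pos.ne'
  have hSdet : IsUnit S.det := isUnit_iff_ne_zero.2 hS.det_pos.ne'
  have hCi : (C⁻¹).PosDef := hC.inv
  have hSi : (S⁻¹).PosDef := hS.inv
  have hCisym : (C⁻¹)ᵀ = C⁻¹ := symm_of_posSemidef hCi.posSemidef
  have hSisym : (S⁻¹)ᵀ = S⁻¹ := symm_of_posSemidef hSi.posSemidef
  have hSsym : Sᵀ = S := symm_of_posSemidef hS.posSemidef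
  have hMpsd : (Zᵀ * S * Z).PosSemidef := by
    have h := hS.posSemidef.conjTranspose_mul_mul_same Z
    rwa [Matrix.conjTranspose_eq_transpose_of_trivial] at h
  have hqfM : ∀ v : Fin n → ℝ, qf (Zᵀ * S * Z) v = (Z *ᵥ v) ⬝ᵥ (S *ᵥ (Z *ᵥ v)) := by
    intro v
    rw [qf, show (Zᵀ * S * Z) *ᵥ v = Zᵀ *ᵥ (S *ᵥ (Z *ᵥ v)) by
      rw [Matrix.mulVec_mulVec, Matrix.mulVec_mulVec, Matrix.mul_assoc], dot_ZT]
  -- Step A : the one-step Lyapunov inequality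
  have step : ∀ t : ℕ,
      qf S⁻¹ (ωs - ω (t+1)) + qf C⁻¹ (αs - α (t+1)) + qf (Zᵀ * S * Z) (α (t - d))
        + ((d:ℝ)+1)^2 * qf (Zᵀ * S * Z) (α (t+1) - α t)
      ≤ qf S⁻¹ (ωs - ω (t - d)) + qf C⁻¹ (αs - α t)
        + ((d:ℝ)+1) * ∑ j ∈ Finset.Icc (t - d) t, qf (Zᵀ * S * Z) (α (j+1) - α j) := by
    intro t
    have hSiS : ∀ w : Fin p → ℝ, S⁻¹ *ᵥ (S *ᵥ w) = w := by
      intro w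
      rw [Matrix.mulVec_mulVec, Matrix.nonsing_inv_mul S hSdet, Matrix.one_mulVec]
    set hv : Fin n → ℝ := gs (α t) + Zᵀ *ᵥ ω (t - d) + (Zᵀ * S * Z) *ᵥ α (t - d) with hhvdef
    set u : Fin n → ℝ := α t - C *ᵥ hv with hudef
    have F1 : ∀ v : Fin n → ℝ, qf C⁻¹ (v - u)
        = qf C⁻¹ (v - α t) + 2 * ((v - α t) ⬝ᵥ hv) + qf C⁻¹ (C *ᵥ hv) := by
      intro v
      have hvu : v - u = (v - α t) + C *ᵥ hv := by rw [hudef]; abel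
      rw [hvu, qf_add hCisym, Matrix.mulVec_mulVec, Matrix.nonsing_inv_mul C hCdet,
        Matrix.one_mulVec]
    have F2 := prox_strong hCi Hr hr u (α (t+1)) (fun v => hα t v) αs
    rw [F1 (α (t+1)), F1 αs] at F2
    have F4 := hsmooth (α t) (α (t+1))
    have F5 := hconv_s (α t) αs
    have F6 := hsaddle (α (t+1))
    have hdot : ∀ v : Fin n → ℝ, v ⬝ᵥ hv
        = gs (α t) ⬝ᵥ v + (Z *ᵥ v) ⬝ᵥ ω (t - d) + (Z *ᵥ v) ⬝ᵥ (S *ᵥ (Z *ᵥ α (t - d))) := by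
      intro v
      rw [hhvdef, dotProduct_add, dotProduct_add, dot_ZT,
        dotProduct_comm v (gs (α t))]
      congr 1
      rw [show (Zᵀ * S * Z) *ᵥ α (t - d) = Zᵀ *ᵥ (S *ᵥ (Z *ᵥ α (t - d))) by
        rw [Matrix.mulVec_mulVec, Matrix.mulVec_mulVec, Matrix.mul_assoc], dot_ZT]
    have hd1 := hdot (α (t+1) - α t)
    have hd2 := hdot (αs - α t)
    simp only [Matrix.mulVec_sub, hZαs, sub_dotProduct, dotProduct_sub,
      zero_dotProduct, dotProduct_zero, zero_sub, neg_dotProduct,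
      dotProduct_neg] at hd1 hd2 F2 F4 F5
    have homega : ω (t+1) - ω (t - d) = S *ᵥ (Z *ᵥ α (t+1)) := by
      rw [hω t, Matrix.mulVec_mulVec]
      abel
    have h3p := three_point hSisym ωs (ω (t - d)) (ω (t+1))
    rw [homega, hSiS] at h3p
    rw [show qf S⁻¹ (S *ᵥ (Z *ᵥ α (t+1))) = (Z *ᵥ α (t+1)) ⬝ᵥ (S *ᵥ (Z *ᵥ α (t+1))) by
      rw [qf, hSiS, dotProduct_comm], sub_dotProduct] at h3p
    have hcomm1 : (Z *ᵥ α (t+1)) ⬝ᵥ ω (t - d) = ω (t - d) ⬝ᵥ (Z *ᵥ α (t+1)) :=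
      dotProduct_comm _ _
    have hcomm2 : (Z *ᵥ α (t+1)) ⬝ᵥ ωs = ωs ⬝ᵥ (Z *ᵥ α (t+1)) :=
      dotProduct_comm _ _
    have F9 : 2 * ((Z *ᵥ α (t+1)) ⬝ᵥ (S *ᵥ (Z *ᵥ α (t - d))))
        = (Z *ᵥ α (t+1)) ⬝ᵥ (S *ᵥ (Z *ᵥ α (t+1))) + qf (Zᵀ * S * Z) (α (t - d))
          - qf (Zᵀ * S * Z) (α (t+1) - α (t - d)) := by
      have hq := qf_sub hSsym (Z *ᵥ α (t+1)) (Z *ᵥ α (t - d))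
      have h1 : qf S (Z *ᵥ α (t+1)) = (Z *ᵥ α (t+1)) ⬝ᵥ (S *ᵥ (Z *ᵥ α (t+1))) := rfl
      have h2 : qf S (Z *ᵥ α (t - d)) = qf (Zᵀ * S * Z) (α (t - d)) := by
        rw [hqfM]; rfl
      have h3 : qf S (Z *ᵥ α (t+1) - Z *ᵥ α (t - d))
          = qf (Zᵀ * S * Z) (α (t+1) - α (t - d)) := by
        rw [hqfM, Matrix.mulVec_sub]; rfl
      rw [h1, h2, h3] at hq
      linarith
    have F10 : qf Hm (α (t+1) - α t) + ((d:ℝ)+1)^2 * qf (Zᵀ * S * Z) (α (t+1) - α t)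
        ≤ qf C⁻¹ (α (t+1) - α t) := by
      have h0 := qf_nonneg hstep1 (α (t+1) - α t)
      rw [qf_sub_matrix, qf_sub_matrix] at h0
      rw [show Zᵀ * (((1 + (d:ℝ))) ^ 2 • S) * Z = ((1 + (d:ℝ)))^2 • (Zᵀ * S * Z) by
        rw [Matrix.mul_smul, Matrix.smul_mul], qf_smul_matrix] at h0
      have he : ((1:ℝ) + (d:ℝ))^2 = ((d:ℝ)+1)^2 := by ring
      rw [he] at h0
      linarith
    have htel : ∑ j ∈ Finset.Icc (t - d) t, (α (j+1) - α j) = α (t+1) - α (t - d) := by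
      rw [← Finset.Ico_add_one_right_eq_Icc, Finset.sum_Ico_eq_sub _ (by omega : t - d ≤ t + 1),
        Finset.sum_range_sub, Finset.sum_range_sub]
      abel
    have F11 : qf (Zᵀ * S * Z) (α (t+1) - α (t - d))
        ≤ ((d:ℝ)+1) * ∑ j ∈ Finset.Icc (t - d) t, qf (Zᵀ * S * Z) (α (j+1) - α j) := by
      rw [← htel]
      have h := qf_sum_le hMpsd (Finset.Icc (t - d) t) (fun j => α (j+1) - α j)
      have hcard : (((Finset.Icc (t - d) t).card : ℕ) : ℝ) ≤ (d:ℝ)+1 := by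
        have : (Finset.Icc (t - d) t).card ≤ d + 1 := by rw [Nat.card_Icc]; omega
        exact_mod_cast this
      have hsumnn : 0 ≤ ∑ j ∈ Finset.Icc (t - d) t, qf (Zᵀ * S * Z) (α (j+1) - α j) :=
        Finset.sum_nonneg fun j _ => qf_nonneg hMpsd _
      calc qf (Zᵀ * S * Z) (∑ j ∈ Finset.Icc (t - d) t, (α (j+1) - α j))
          ≤ (Finset.Icc (t - d) t).card * ∑ j ∈ Finset.Icc (t - d) t,
              qf (Zᵀ * S * Z) (α (j+1) - α j) := h
        _ ≤ ((d:ℝ)+1) * ∑ j ∈ Finset.Icc (t - d) t, qf (Zᵀ * S * Z) (α (j+1) - α j) :=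
            mul_le_mul_of_nonneg_right hcard hsumnn
    linarith [F2, F4, F5, F6, hd1, hd2, h3p, F9, F10, F11, hcomm1, hcomm2]
  -- Step B : summing up
  have stepB : ∀ N : ℕ, ∑ t ∈ range N, qf (Zᵀ * S * Z) (α (t - d))
      ≤ qf C⁻¹ (αs - α 0) + ((d:ℝ)+1) * qf S⁻¹ (ωs - ω 0) := by
    intro N
    have hsum := Finset.sum_le_sum (fun t (_ : t ∈ range N) => step t)
    simp only [Finset.sum_add_distrib, ← Finset.mul_sum] at hsum
    have h1 := sum_shift_le (fun t => qf S⁻¹ (ωs - ω t))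
      (fun t => qf_nonneg hSi.posSemidef _) d N
    have h2 := Finset.sum_range_succ' (fun t => qf C⁻¹ (αs - α t)) N
    have h2' := Finset.sum_range_succ (fun t => qf C⁻¹ (αs - α t)) N
    have h3 := double_sum_le (fun j => qf (Zᵀ * S * Z) (α (j+1) - α j))
      (fun j => qf_nonneg hMpsd _) d N
    have h4 : 0 ≤ qf C⁻¹ (αs - α N) := qf_nonneg hCi.posSemidef _
    have h7 := mul_le_mul_of_nonneg_left h3 (show (0:ℝ) ≤ (d:ℝ)+1 by positivity)
    have h6 : ((d:ℝ)+1) * (((d:ℝ)+1) * ∑ t ∈ range N, qf (Zᵀ * S * Z) (α (t+1) - α t))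
        = ((d:ℝ)+1)^2 * ∑ t ∈ range N, qf (Zᵀ * S * Z) (α (t+1) - α t) := by ring
    simp only at h1 h2 h2' h3 h7
    linarith
  -- summability and convergence of the feasibility residual
  have hsummable : Summable (fun t => qf (Zᵀ * S * Z) (α (t - d))) :=
    summable_of_sum_range_le (fun t => qf_nonneg hMpsd _) stepB
  have h0 : Tendsto (fun t => qf (Zᵀ * S * Z) (α (t - d))) atTop (nhds 0) :=
    hsummable.tendsto_atTop_zero
  have hσ : Tendsto (fun t => qf (Zᵀ * S * Z) (α t)) atTop (nhds 0) := by
    have h := h0.comp (tendsto_add_atTop_nat d)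
    have : (fun t => qf (Zᵀ * S * Z) (α (t + d - d))) = fun t => qf (Zᵀ * S * Z) (α t) := by
      funext t; rw [Nat.add_sub_cancel]
    rwa [Function.comp_def, this] at h
  -- from the quadratic form to the vector
  obtain ⟨R, hRpsd, hRR⟩ := exists_sqrt_aux S hS.posSemidef
  have hRsym : Rᵀ = R := symm_of_posSemidef hRpsd
  have hRdet : IsUnit R.det := by
    have h : R.det * R.det = S.det := by rw [← Matrix.det_mul, hRR]
    have := hS.det_pos
    refine isUnit_iff_ne_zero.2 fun h0 => ?_
    rw [h0, mul_zero] at h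
    linarith [h ▸ this]
  have hqf_eq : ∀ t, qf (Zᵀ * S * Z) (α t)
      = (R *ᵥ (Z *ᵥ α t)) ⬝ᵥ (R *ᵥ (Z *ᵥ α t)) := by
    intro t
    rw [hqfM, show S *ᵥ (Z *ᵥ α t) = R *ᵥ (R *ᵥ (Z *ᵥ α t)) by
      rw [Matrix.mulVec_mulVec (Z *ᵥ α t) R R, hRR], dot_symm2 hRsym]
  have hRy : Tendsto (fun t => R *ᵥ (Z *ᵥ α t)) atTop (nhds 0) := by
    rw [tendsto_pi_nhds]
    intro i
    have hcomp : Tendsto (fun t => ((R *ᵥ (Z *ᵥ α t)) i) ^ 2) atTop (nhds 0) := by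
      apply squeeze_zero (fun t => sq_nonneg _) (fun t => ?_) hσ
      rw [hqf_eq t]
      have : (R *ᵥ (Z *ᵥ α t)) ⬝ᵥ (R *ᵥ (Z *ᵥ α t))
          = ∑ j, ((R *ᵥ (Z *ᵥ α t)) j) * ((R *ᵥ (Z *ᵥ α t)) j) := rfl
      rw [this, sq]
      exact Finset.single_le_sum
        (f := fun j => ((R *ᵥ (Z *ᵥ α t)) j) * ((R *ᵥ (Z *ᵥ α t)) j))
        (fun j _ => mul_self_nonneg _) (Finset.mem_univ i)
    have := tendsto_of_sq hcomp
    simpa using this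
  have hy : Tendsto (fun t => Z *ᵥ α t) atTop (nhds 0) := by
    have h := mulVec_tendsto_zero R⁻¹ hRy
    have he : (fun t => R⁻¹ *ᵥ (R *ᵥ (Z *ᵥ α t))) = fun t => Z *ᵥ α t := by
      funext t
      rw [Matrix.mulVec_mulVec, Matrix.nonsing_inv_mul R hRdet, Matrix.one_mulVec]
    rwa [he] at h
  constructor
  · have h1 : Tendsto (fun t => Z *ᵥ α (t + 1)) atTop (nhds 0) := by
      have h := hy.comp (tendsto_add_atTop_nat 1)
      rwa [Function.comp_def] at h
    have h2 := mulVec_tendsto_zero S h1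
    have he : (fun t : ℕ => ω (t + 1) - ω (t - d)) = fun t => S *ᵥ (Z *ᵥ α (t + 1)) := by
      funext t
      rw [hω t, ← Matrix.mulVec_mulVec]
      abel
    rwa [he]
  · exact hy
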